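/- Let E be a complex Banach space, H : ℝ → B(E) continuous in operator norm, P ∈ B(E) an idempotent, Q := 1 − P, and t₀ ≤ t. With Uₙ(t,t₀) := (−i)ⁿ ∫_{t₀}^{t} dt₁ ∫_{t₀}^{t₁} dt₂ ⋯ ∫_{t₀}^{t_{n−1}} dtₙ H(t₁)⋯H(tₙ), θ_P(s) := Q for s > 0 and −P for s ≤ 0, and Cₙ(t,t₀) := (−i)ⁿ ∫_{[t₀,t]ⁿ} H(t₁) θ_P(t₁−t₂) H(t₂) ⋯ θ_P(t_{n−1}−tₙ) H(tₙ) dt₁⋯dtₙ, one has for every n ≥ 1: Uₙ(t,t₀) = Cₙ(t,t₀) + Σ_{i=1}^{n−1} Cᵢ(t,t₀) P U_{n−i}(t,t₀). -/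

import Mathlib

set_option maxHeartbeats 1000000
set_option synthInstance.maxHeartbeats 400000

open MeasureTheory

noncomputable def nested {F : Type*} [NormedAddCommGroup F] [NormedSpace ℝ F] :
    (n : ℕ) → ((Fin n → ℝ) → F) → ℝ → ℝ → F
  | 0, f, _, _ => f Fin.elim0
  | n + 1, f, t₀, t => ∫ s in t₀..t, nested n (fun u => f (Fin.cons s u)) t₀ s

open MeasureTheory

variable {E : Type*} [NormedAddCommGroup E] [NormedSpace ℂ E] [CompleteSpace E]

/-- The `n`-th Picard–Dyson term
`Uₙ(t,t₀) = (−i)ⁿ ∫_{t₀}^{t} dt₁ ∫_{t₀}^{t₁} dt₂ ⋯ ∫_{t₀}^{t_{n−1}} dtₙ H(t₁)⋯H(tₙ)`. -/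
noncomputable def Uterm (H : ℝ → E →L[ℂ] E) (t₀ t : ℝ) (n : ℕ) : E →L[ℂ] E :=
  (-Complex.I) ^ n • nested n (fun u => (List.ofFn fun i => H (u i)).prod) t₀ t

/-- `θ_P(s) = Q = 1 − P` for `s > 0` and `θ_P(s) = −P` for `s ≤ 0`. -/
noncomputable def thetaP (P : E →L[ℂ] E) (s : ℝ) : E →L[ℂ] E :=
  if 0 < s then 1 - P else -P

/-- `Cₙ(t,t₀) = (−i)ⁿ ∫_{[t₀,t]ⁿ} H(t₁) θ_P(t₁−t₂) H(t₂) ⋯ θ_P(t_{n−1}−tₙ) H(tₙ) dt₁⋯dtₙ`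
(a Bochner integral over the cube `[t₀,t]ⁿ`). -/
noncomputable def Cterm (H : ℝ → E →L[ℂ] E) (P : E →L[ℂ] E) (t₀ t : ℝ) (n : ℕ) :
    E →L[ℂ] E :=
  (-Complex.I) ^ n •
    ∫ u in Set.Icc (fun _ : Fin n => t₀) (fun _ => t),
      (List.ofFn fun i : Fin n =>
        H (u i) * if h : (i : ℕ) + 1 < n then thetaP P (u i - u ⟨(i : ℕ) + 1, h⟩) else 1).prod

namespace DysonAux

variable {E : Type*} [NormedAddCommGroup E] [NormedSpace ℂ E]

/-- scalar step indicator -/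
noncomputable def chR (s : ℝ) : ℝ := if 0 < s then 1 else 0

/-- operator step indicator -/
noncomputable def chO (s : ℝ) : E →L[ℂ] E := if 0 < s then 1 else 0

/-- products of the form `φ 0 (u 0) (u 1) * H (u 1) * φ 1 (u 1) (u 2) * H (u 2) * ⋯` -/
noncomputable def qc (H : ℝ → E →L[ℂ] E) (φ : ℕ → ℝ → ℝ → E →L[ℂ] E) :
    ℕ → (ℕ → ℝ) → E →L[ℂ] E
  | 0, _ => 1
  | n+1, u => φ 0 (u 0) (u 1) * H (u 1) * qc H (fun k => φ (k+1)) n (fun i => u (i+1))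

/-- products of the form `H (u 0) * φ 0 (u 0) (u 1) * H (u 1) * ⋯ * H (u (n-1))` -/
noncomputable def pc (H : ℝ → E →L[ℂ] E) (φ : ℕ → ℝ → ℝ → E →L[ℂ] E) :
    ℕ → (ℕ → ℝ) → E →L[ℂ] E
  | 0, _ => 1
  | n+1, u => H (u 0) * qc H φ n u

/-- mixed gap functions: `thetaP` for the first `c` gaps, step indicator afterwards. -/
noncomputable def phiM (P : E →L[ℂ] E) (c : ℕ) : ℕ → ℝ → ℝ → E →L[ℂ] E :=
  fun j a b => if j < c then thetaP P (a - b) else chO (a - b)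

/-- extend a `Fin n`-indexed tuple by `0` -/
def exv (n : ℕ) (u : Fin n → ℝ) : ℕ → ℝ := fun i => if h : i < n then u ⟨i, h⟩ else 0

/-- the cube `[t₀, t]ⁿ` -/
def cube (t₀ t : ℝ) (n : ℕ) : Set (Fin n → ℝ) := Set.Icc (fun _ => t₀) (fun _ => t)

section basic

variable {H : ℝ → E →L[ℂ] E} {φ ψ : ℕ → ℝ → ℝ → E →L[ℂ] E} {P : E →L[ℂ] E}

lemma qc_congr : ∀ (n : ℕ) (φ ψ : ℕ → ℝ → ℝ → E →L[ℂ] E) (v w : ℕ → ℝ),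
    (∀ j < n, ∀ a b, φ j a b = ψ j a b) → (∀ i ≤ n, v i = w i) →
    qc H φ n v = qc H ψ n w
  | 0, φ, ψ, v, w, _, _ => rfl
  | n+1, φ, ψ, v, w, hφ, hv => by
      simp only [qc]
      rw [hv 0 (by omega), hv 1 (by omega), hφ 0 (by omega),
        qc_congr n _ _ _ _ (fun j hj a b => hφ (j+1) (by omega) a b)
          (fun i hi => hv (i+1) (by omega))]

lemma pc_congr (n : ℕ) (v w : ℕ → ℝ)
    (hφ : ∀ j, j + 1 < n → ∀ a b, φ j a b = ψ j a b) (hv : ∀ i < n, v i = w i) :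
    pc H φ n v = pc H ψ n w := by
  cases n with
  | zero => rfl
  | succ n =>
      simp only [pc]
      rw [hv 0 (by omega), qc_congr n _ _ _ _ (fun j hj a b => hφ j (by omega) a b)
        (fun i hi => hv i (by omega))]

lemma qc_split : ∀ (a : ℕ) (k : ℕ), 1 ≤ k → ∀ (φ : ℕ → ℝ → ℝ → E →L[ℂ] E) (v : ℕ → ℝ),
    qc H φ (a + k) v =
      qc H φ a v * φ a (v a) (v (a+1)) * pc H (fun j => φ (j + (a+1))) k (fun i => v (i + (a+1)))
  | 0, k, hk, φ, v => by
      obtain ⟨k', rfl⟩ : ∃ k', k = k' + 1 := ⟨k - 1, by omega⟩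
      rw [Nat.zero_add]
      simp only [qc, pc, one_mul, mul_assoc]
  | a+1, k, hk, φ, v => by
      have h1 : a + 1 + k = (a + k) + 1 := by omega
      rw [h1]
      simp only [qc]
      rw [qc_split a k hk (fun j => φ (j+1)) (fun i => v (i+1))]
      simp only [qc, pc, mul_assoc]
      rfl

lemma pc_split (a k : ℕ) (hk : 1 ≤ k) (φ : ℕ → ℝ → ℝ → E →L[ℂ] E) (v : ℕ → ℝ) :
    pc H φ (a + 1 + k) v =
      pc H φ (a + 1) v * φ a (v a) (v (a+1)) *
        pc H (fun j => φ (j + (a+1))) k (fun i => v (i + (a+1))) := by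
  have h1 : a + 1 + k = (a + k) + 1 := by omega
  rw [h1]
  show H (v 0) * qc H φ (a + k) v = _
  rw [qc_split a k hk φ v]
  simp only [pc, mul_assoc]

end basic

section pointwise

variable {H : ℝ → E →L[ℂ] E} {P : E →L[ℂ] E}

lemma thetaP_eq (P : E →L[ℂ] E) (s : ℝ) : thetaP P s = chO s - P := by
  unfold thetaP chO
  split_ifs <;> simp

lemma chO_mul (s : ℝ) (T : E →L[ℂ] E) : chO s * T = chR s • T := by
  unfold chO chR
  split_ifs <;> simp

lemma phiM_shift (P : E →L[ℂ] E) (c m : ℕ) :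
    (fun j => phiM P c (j + m)) = phiM P (c - m) := by
  funext j a b
  unfold phiM
  by_cases h : j + m < c
  · rw [if_pos h, if_pos (by omega)]
  · rw [if_neg h, if_neg (by omega)]

lemma phiM_zero (P : E →L[ℂ] E) : phiM P 0 = fun _ a b => chO (a - b) := by
  funext j a b; unfold phiM; rw [if_neg (by omega)]

end pointwise

section meas

variable {H : ℝ → E →L[ℂ] E} {P : E →L[ℂ] E}

lemma sm_qc (hH : Continuous H) (P : E →L[ℂ] E) :
    ∀ (n c : ℕ), StronglyMeasurable (fun w : ℕ → ℝ => qc H (phiM P c) n w)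
  | 0, c => stronglyMeasurable_const
  | n+1, c => by
      show StronglyMeasurable (fun w : ℕ → ℝ =>
        phiM P c 0 (w 0) (w 1) * H (w 1) * qc H (fun k => phiM P c (k+1)) n (fun i => w (i+1)))
      have h1 : StronglyMeasurable (fun w : ℕ → ℝ => phiM P c 0 (w 0) (w 1)) := by
        have hms : MeasurableSet {w : ℕ → ℝ | 0 < w 0 - w 1} :=
          measurableSet_lt measurable_const ((measurable_pi_apply 0).sub (measurable_pi_apply 1))
        by_cases hc : 0 < c
        · simp only [phiM, if_pos hc, thetaP]
          exact StronglyMeasurable.ite hms stronglyMeasurable_const stronglyMeasurable_const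
        · simp only [phiM, if_neg hc, chO]
          exact StronglyMeasurable.ite hms stronglyMeasurable_const stronglyMeasurable_const
      have h2 : StronglyMeasurable (fun w : ℕ → ℝ => H (w 1)) :=
        hH.stronglyMeasurable.comp_measurable (measurable_pi_apply 1)
      have h3 : StronglyMeasurable
          (fun w : ℕ → ℝ => qc H (fun k => phiM P c (k+1)) n (fun i => w (i+1))) := by
        have := (sm_qc hH P n (c - 1)).comp_measurable
          (measurable_pi_lambda (fun (w : ℕ → ℝ) (i : ℕ) => w (i+1))
            (fun i => measurable_pi_apply (i+1)))
        rw [phiM_shift P c 1]; exact this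
      exact (h1.mul h2).mul h3

lemma sm_pc (hH : Continuous H) (P : E →L[ℂ] E) (n c : ℕ) :
    StronglyMeasurable (fun w : ℕ → ℝ => pc H (phiM P c) n w) := by
  cases n with
  | zero => exact stronglyMeasurable_const
  | succ n =>
      show StronglyMeasurable (fun w : ℕ → ℝ => H (w 0) * qc H (phiM P c) n w)
      exact (hH.stronglyMeasurable.comp_measurable (measurable_pi_apply 0)).mul (sm_qc hH P n c)

lemma measurable_exv (n : ℕ) : Measurable (fun u : Fin n → ℝ => exv n u) := by
  refine measurable_pi_lambda _ (fun i => ?_)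
  unfold exv
  by_cases h : i < n
  · simp only [dif_pos h]; exact measurable_pi_apply _
  · simp only [dif_neg h]; exact measurable_const

lemma sm_pcFin (hH : Continuous H) (P : E →L[ℂ] E) (n c : ℕ) :
    StronglyMeasurable (fun u : Fin n → ℝ => pc H (phiM P c) n (exv n u)) :=
  (sm_pc hH P n c).comp_measurable (measurable_exv n)

end meas

section bounds

variable {H : ℝ → E →L[ℂ] E} {P : E →L[ℂ] E} {t₀ t MH : ℝ}

/-- a bound for the gap factors -/
noncomputable def MT (P : E →L[ℂ] E) : ℝ := ‖(1 : E →L[ℂ] E) - P‖ + ‖P‖ + 1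

lemma MT_one_le (P : E →L[ℂ] E) : 1 ≤ MT P := by
  have h2 : (0:ℝ) ≤ ‖(1 : E →L[ℂ] E) - P‖ := norm_nonneg _
  have h3 : (0:ℝ) ≤ ‖P‖ := norm_nonneg _
  unfold MT; linarith

lemma MT_nonneg (P : E →L[ℂ] E) : 0 ≤ MT P := le_trans zero_le_one (MT_one_le P)

lemma norm_one_le' : ‖(1 : E →L[ℂ] E)‖ ≤ 1 := by
  rw [ContinuousLinearMap.one_def]; exact ContinuousLinearMap.norm_id_le

lemma phiM_bound (P : E →L[ℂ] E) (c j : ℕ) (a b : ℝ) : ‖phiM P c j a b‖ ≤ MT P := by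
  have h1 : ‖(1 : E →L[ℂ] E)‖ ≤ 1 := norm_one_le'
  have h2 : (0:ℝ) ≤ ‖(1 : E →L[ℂ] E) - P‖ := norm_nonneg _
  have h3 : (0:ℝ) ≤ ‖P‖ := norm_nonneg _
  unfold phiM thetaP chO MT
  split_ifs <;> simp <;> linarith

lemma qc_bound (hMH : ∀ x ∈ Set.Icc t₀ t, ‖H x‖ ≤ MH) (hMH0 : 0 ≤ MH) :
    ∀ (n c : ℕ) (w : ℕ → ℝ), (∀ i ≤ n, w i ∈ Set.Icc t₀ t) →
      ‖qc H (phiM P c) n w‖ ≤ (MT P * MH) ^ n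
  | 0, c, w, hw => by
      show ‖(1 : E →L[ℂ] E)‖ ≤ (MT P * MH) ^ 0
      rw [pow_zero]; exact norm_one_le'
  | n+1, c, w, hw => by
      show ‖phiM P c 0 (w 0) (w 1) * H (w 1) * qc H (fun k => phiM P c (k+1)) n
        (fun i => w (i+1))‖ ≤ _
      rw [phiM_shift P c 1]
      have hq : ‖qc H (phiM P (c-1)) n (fun i => w (i+1))‖ ≤ (MT P * MH) ^ n :=
        qc_bound hMH hMH0 n (c-1) _ (fun i hi => hw (i+1) (by omega))
      have h0 : (0:ℝ) ≤ MT P * MH := mul_nonneg (MT_nonneg P) hMH0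
      calc ‖phiM P c 0 (w 0) (w 1) * H (w 1) * qc H (phiM P (c-1)) n (fun i => w (i+1))‖
          ≤ ‖phiM P c 0 (w 0) (w 1) * H (w 1)‖ * ‖qc H (phiM P (c-1)) n (fun i => w (i+1))‖ :=
            norm_mul_le _ _
        _ ≤ (‖phiM P c 0 (w 0) (w 1)‖ * ‖H (w 1)‖) *
              ‖qc H (phiM P (c-1)) n (fun i => w (i+1))‖ :=
            mul_le_mul_of_nonneg_right (norm_mul_le _ _) (norm_nonneg _)
        _ ≤ (MT P * MH) * (MT P * MH) ^ n := by
            refine mul_le_mul ?_ hq (norm_nonneg _) h0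
            exact mul_le_mul (phiM_bound P c 0 (w 0) (w 1)) (hMH _ (hw 1 (by omega)))
              (norm_nonneg _) (MT_nonneg P)
        _ = (MT P * MH) ^ (n+1) := (pow_succ' _ _).symm

lemma pc_bound (hMH : ∀ x ∈ Set.Icc t₀ t, ‖H x‖ ≤ MH) (hMH0 : 0 ≤ MH)
    (n c : ℕ) (w : ℕ → ℝ) (hw : ∀ i < n, w i ∈ Set.Icc t₀ t) :
    ‖pc H (phiM P c) n w‖ ≤ (MH + 1) * (MT P * MH + 1) ^ n := by
  have h0 : (0:ℝ) ≤ MT P * MH := mul_nonneg (MT_nonneg P) hMH0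
  have hb : (1:ℝ) ≤ MT P * MH + 1 := by linarith
  cases n with
  | zero =>
      show ‖(1 : E →L[ℂ] E)‖ ≤ _
      rw [pow_zero, mul_one]
      calc ‖(1 : E →L[ℂ] E)‖ ≤ 1 := norm_one_le'
        _ ≤ MH + 1 := by linarith
  | succ n =>
      show ‖H (w 0) * qc H (phiM P c) n w‖ ≤ _
      have h1 : (MT P * MH) ^ n ≤ (MT P * MH + 1) ^ n :=
        pow_le_pow_left₀ h0 (by linarith) n
      have h2 : (0:ℝ) ≤ (MT P * MH + 1) ^ n := pow_nonneg (by linarith) n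
      calc ‖H (w 0) * qc H (phiM P c) n w‖
          ≤ ‖H (w 0)‖ * ‖qc H (phiM P c) n w‖ := norm_mul_le _ _
        _ ≤ MH * (MT P * MH) ^ n :=
            mul_le_mul (hMH _ (hw 0 (by omega)))
              (qc_bound hMH hMH0 n c w (fun i hi => hw i (by omega)))
              (norm_nonneg _) hMH0
        _ ≤ (MH + 1) * (MT P * MH + 1) ^ n := by
            refine mul_le_mul (by linarith) h1 (pow_nonneg h0 n) (by linarith)
        _ ≤ (MH + 1) * ((MT P * MH + 1) ^ n * (MT P * MH + 1)) := by
            refine mul_le_mul_of_nonneg_left ?_ (by linarith)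
            exact le_mul_of_one_le_right h2 hb
        _ = (MH + 1) * (MT P * MH + 1) ^ (n+1) := by rw [← pow_succ]

end bounds


section cubefacts

variable {t₀ t : ℝ} {n : ℕ}

lemma cube_eq_pi (t₀ t : ℝ) (n : ℕ) :
    cube t₀ t n = Set.pi Set.univ (fun _ : Fin n => Set.Icc t₀ t) := by
  rw [Set.pi_univ_Icc]; rfl

lemma measurableSet_cube (t₀ t : ℝ) (n : ℕ) : MeasurableSet (cube t₀ t n) := by
  rw [cube_eq_pi]; exact MeasurableSet.univ_pi (fun _ => measurableSet_Icc)

lemma cube_vol_lt (t₀ t : ℝ) (n : ℕ) : volume (cube t₀ t n) < ⊤ :=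
  (isCompact_Icc : IsCompact (cube t₀ t n)).measure_lt_top

lemma mem_cube {u : Fin n → ℝ} : u ∈ cube t₀ t n ↔ ∀ i, u i ∈ Set.Icc t₀ t := by
  simp only [cube, Set.mem_Icc, Pi.le_def]
  exact ⟨fun h i => ⟨h.1 i, h.2 i⟩, fun h => ⟨fun i => (h i).1, fun i => (h i).2⟩⟩

lemma cons_mem_cube {x : ℝ} {v : Fin n → ℝ} :
    Fin.cons x v ∈ cube t₀ t (n+1) ↔ x ∈ Set.Icc t₀ t ∧ v ∈ cube t₀ t n := by
  simp only [mem_cube, Fin.forall_fin_succ, Fin.cons_zero, Fin.cons_succ]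

end cubefacts

section integinfra

variable {G : Type*} [NormedAddCommGroup G] [NormedSpace ℝ G]

lemma integrableOn_of_bound {X : Type*} [MeasurableSpace X] {μ : Measure X} {s : Set X}
    (hs : MeasurableSet s) (hμ : μ s < ⊤) {f : X → G}
    (hf : AEStronglyMeasurable f (μ.restrict s)) {C : ℝ} (hC : ∀ x ∈ s, ‖f x‖ ≤ C) :
    IntegrableOn f s μ := by
  refine Integrable.mono' (g := fun _ => C) (integrableOn_const hμ.ne) hf ?_
  filter_upwards [ae_restrict_mem hs] with x hx using hC x hx

variable {t₀ t : ℝ}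

/-- Peeling off the first coordinate of an integral over a cube. -/
lemma peel [CompleteSpace G] (n : ℕ) (F : (Fin (n+1) → ℝ) → G) (hSM : StronglyMeasurable F)
    (C : ℝ) (hC : ∀ u ∈ cube t₀ t (n+1), ‖F u‖ ≤ C) :
    ∫ u in cube t₀ t (n+1), F u =
      ∫ x in Set.Icc t₀ t, ∫ v in cube t₀ t n, F (Fin.cons x v) := by
  set e := MeasurableEquiv.piFinSuccAbove (fun _ : Fin (n+1) => ℝ) 0 with he
  have mp : MeasurePreserving e.symm volume volume :=
    (volume_preserving_piFinSuccAbove (fun _ : Fin (n+1) => ℝ) 0).symm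
  have key : ∀ p : ℝ × (Fin n → ℝ), e.symm p = Fin.cons p.1 p.2 := by
    intro p
    funext i
    simp [he, MeasurableEquiv.piFinSuccAbove_symm_apply, Fin.insertNthEquiv, Fin.insertNth_zero]
  have hpre : e.symm ⁻¹' (cube t₀ t (n+1)) = (Set.Icc t₀ t) ×ˢ (cube t₀ t n) := by
    ext p
    simp only [Set.mem_preimage, key, Set.mem_prod]
    exact cons_mem_cube
  have hInt : Integrable (fun p : ℝ × (Fin n → ℝ) => F (Fin.cons p.1 p.2))
      ((volume.restrict (Set.Icc t₀ t)).prod (volume.restrict (cube t₀ t n))) := by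
    rw [Measure.prod_restrict]
    have hmeas : Measurable fun p : ℝ × (Fin n → ℝ) => (Fin.cons p.1 p.2 : Fin (n+1) → ℝ) := by
      refine measurable_pi_lambda _ (fun i => ?_)
      refine Fin.cases ?_ ?_ i
      · simpa using measurable_fst
      · intro j
        have hj : Measurable fun c : ℝ × (Fin n → ℝ) => c.2 j :=
          (measurable_pi_apply j).comp measurable_snd
        simpa using hj
    refine integrableOn_of_bound (measurableSet_Icc.prod (measurableSet_cube t₀ t n)) ?_
      ((hSM.comp_measurable hmeas).aestronglyMeasurable) (C := C) ?_
    · rw [Measure.prod_prod]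
      exact ENNReal.mul_lt_top (measure_Icc_lt_top) (cube_vol_lt t₀ t n)
    · rintro ⟨x, v⟩ ⟨hx, hv⟩
      exact hC _ (cons_mem_cube.2 ⟨hx, hv⟩)
  calc ∫ u in cube t₀ t (n+1), F u
      = ∫ p in e.symm ⁻¹' (cube t₀ t (n+1)), F (e.symm p) :=
        (mp.setIntegral_preimage_emb (MeasurableEquiv.measurableEmbedding e.symm) F _).symm
    _ = ∫ p in (Set.Icc t₀ t) ×ˢ (cube t₀ t n), F (Fin.cons p.1 p.2) := by
        rw [hpre]; simp only [key]
    _ = ∫ x in Set.Icc t₀ t, ∫ v in cube t₀ t n, F (Fin.cons x v) := by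
        rw [show (volume : Measure (ℝ × (Fin n → ℝ))) = (volume : Measure ℝ).prod volume from
          rfl, ← Measure.prod_restrict]
        exact integral_prod _ hInt

/-- Splitting an integral over a cube of a product function. -/
lemma splitInt [CompleteSpace E] (m k : ℕ) (f : (Fin m → ℝ) → E →L[ℂ] E)
    (g : (Fin k → ℝ) → E →L[ℂ] E)
    (hf : StronglyMeasurable f) (hg : StronglyMeasurable g)
    (Cf Cg : ℝ) (hCf : ∀ u ∈ cube t₀ t m, ‖f u‖ ≤ Cf) (hCg : ∀ u ∈ cube t₀ t k, ‖g u‖ ≤ Cg) :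
    ∫ u in cube t₀ t (m+k),
        f (fun i => u (Fin.castAdd k i)) * g (fun i => u (Fin.natAdd m i)) =
      (∫ u in cube t₀ t m, f u) * ∫ v in cube t₀ t k, g v := by
  set e2 := (MeasurableEquiv.sumPiEquivProdPi (fun _ : Fin m ⊕ Fin k => ℝ)).symm.trans
    (MeasurableEquiv.piCongrLeft (fun _ => ℝ) finSumFinEquiv) with he2
  have mp : MeasurePreserving e2 volume volume := by
    have h1 := volume_measurePreserving_sumPiEquivProdPi_symm (fun _ : Fin m ⊕ Fin k => ℝ)
    have h2 := volume_measurePreserving_piCongrLeft (fun _ : Fin (m+k) => ℝ)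
      (finSumFinEquiv : Fin m ⊕ Fin k ≃ Fin (m+k))
    have := h2.comp h1
    simpa [he2, MeasurableEquiv.coe_trans] using this
  have keyL : ∀ (x : Fin m → ℝ) (y : Fin k → ℝ) (i : Fin m),
      e2 (x, y) (Fin.castAdd k i) = x i := by
    intro x y i
    have := Equiv.piCongrLeft_sumInl (fun _ : Fin (m+k) => ℝ) finSumFinEquiv x y i
    simpa [he2, MeasurableEquiv.trans_apply, MeasurableEquiv.coe_piCongrLeft,
      MeasurableEquiv.coe_sumPiEquivProdPi_symm, finSumFinEquiv_apply_left] using this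
  have keyR : ∀ (x : Fin m → ℝ) (y : Fin k → ℝ) (j : Fin k),
      e2 (x, y) (Fin.natAdd m j) = y j := by
    intro x y j
    have := Equiv.piCongrLeft_sumInr (fun _ : Fin (m+k) => ℝ) finSumFinEquiv x y j
    simpa [he2, MeasurableEquiv.trans_apply, MeasurableEquiv.coe_piCongrLeft,
      MeasurableEquiv.coe_sumPiEquivProdPi_symm, finSumFinEquiv_apply_right] using this
  have hpre : e2 ⁻¹' (cube t₀ t (m+k)) = (cube t₀ t m) ×ˢ (cube t₀ t k) := by
    ext ⟨x, y⟩
    simp only [Set.mem_preimage, Set.mem_prod, mem_cube]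
    constructor
    · intro h
      refine ⟨fun i => ?_, fun j => ?_⟩
      · rw [← keyL x y i]; exact h _
      · rw [← keyR x y j]; exact h _
    · rintro ⟨h1, h2⟩ i
      refine Fin.addCases (fun j => ?_) (fun j => ?_) i
      · rw [keyL]; exact h1 j
      · rw [keyR]; exact h2 j
  have hgInt : IntegrableOn g (cube t₀ t k) volume :=
    integrableOn_of_bound (measurableSet_cube t₀ t k) (cube_vol_lt t₀ t k)
      hg.aestronglyMeasurable hCg
  have hfInt : IntegrableOn f (cube t₀ t m) volume :=
    integrableOn_of_bound (measurableSet_cube t₀ t m) (cube_vol_lt t₀ t m)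
      hf.aestronglyMeasurable hCf
  have hInt : Integrable (fun p : (Fin m → ℝ) × (Fin k → ℝ) => f p.1 * g p.2)
      ((volume.restrict (cube t₀ t m)).prod (volume.restrict (cube t₀ t k))) := by
    rw [Measure.prod_restrict]
    refine integrableOn_of_bound ((measurableSet_cube t₀ t m).prod (measurableSet_cube t₀ t k))
      ?_ (((hf.comp_measurable measurable_fst).mul
        (hg.comp_measurable measurable_snd)).aestronglyMeasurable) (C := Cf * Cg) ?_
    · rw [Measure.prod_prod]
      exact ENNReal.mul_lt_top (cube_vol_lt t₀ t m) (cube_vol_lt t₀ t k)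
    · rintro ⟨x, y⟩ ⟨hx, hy⟩
      have h0 : (0:ℝ) ≤ Cg := le_trans (norm_nonneg _) (hCg y hy)
      calc ‖f x * g y‖ ≤ ‖f x‖ * ‖g y‖ := norm_mul_le _ _
        _ ≤ Cf * Cg := mul_le_mul (hCf x hx) (hCg y hy) (norm_nonneg _)
            (le_trans (norm_nonneg _) (hCf x hx))
  calc ∫ u in cube t₀ t (m+k),
        f (fun i => u (Fin.castAdd k i)) * g (fun i => u (Fin.natAdd m i))
      = ∫ p in e2 ⁻¹' (cube t₀ t (m+k)),
          f (fun i => e2 p (Fin.castAdd k i)) * g (fun i => e2 p (Fin.natAdd m i)) :=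
        (mp.setIntegral_preimage_emb (MeasurableEquiv.measurableEmbedding e2) _ _).symm
    _ = ∫ p in (cube t₀ t m) ×ˢ (cube t₀ t k), f p.1 * g p.2 := by
        rw [hpre]
        refine setIntegral_congr_fun
          ((measurableSet_cube t₀ t m).prod (measurableSet_cube t₀ t k)) ?_
        rintro ⟨x, y⟩ _
        show (f fun i => e2 (x, y) (Fin.castAdd k i)) * (g fun i => e2 (x, y) (Fin.natAdd m i))
          = f x * g y
        congr 1
        · congr 1; funext i; exact keyL x y i
        · congr 1; funext j; exact keyR x y j
    _ = ∫ x in cube t₀ t m, ∫ y in cube t₀ t k, f x * g y := by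
        rw [show (volume : Measure ((Fin m → ℝ) × (Fin k → ℝ)))
          = (volume : Measure (Fin m → ℝ)).prod volume from rfl, ← Measure.prod_restrict]
        exact integral_prod _ hInt
    _ = ∫ x in cube t₀ t m, f x * ∫ y in cube t₀ t k, g y := by
        refine setIntegral_congr_fun (measurableSet_cube t₀ t m) (fun x _ => ?_)
        exact ((ContinuousLinearMap.mul ℂ (E →L[ℂ] E) (f x)).integral_comp_comm hgInt)
    _ = (∫ u in cube t₀ t m, f u) * ∫ v in cube t₀ t k, g v := by
        have := (((ContinuousLinearMap.mul ℂ (E →L[ℂ] E)).flip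
          (∫ v in cube t₀ t k, g v)).integral_comp_comm hfInt)
        simpa using this

end integinfra


section bridge

variable {H : ℝ → E →L[ℂ] E} {P : E →L[ℂ] E} {t₀ t : ℝ}

/-- plain product of Hamiltonians -/
noncomputable def pH (H : ℝ → E →L[ℂ] E) (n : ℕ) (u : Fin n → ℝ) : E →L[ℂ] E :=
  (List.ofFn fun i => H (u i)).prod

lemma pH_cons (n : ℕ) (x : ℝ) (v : Fin n → ℝ) :
    pH H (n+1) (Fin.cons x v) = H x * pH H n v := by
  unfold pH
  rw [List.ofFn_succ, List.prod_cons]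
  simp [Fin.cons_succ]

lemma pH_one (x : ℝ) (v : Fin 0 → ℝ) : pH H 1 (Fin.cons x v) = H x := by
  unfold pH
  simp

lemma chR_abs_le (q : ℝ) : |chR q| ≤ 1 := by
  unfold chR; split_ifs <;> simp

lemma chR_smul_eq_indicator {G : Type*} [AddCommMonoid G] [Module ℝ G]
    (s : ℝ) (g : ℝ → G) (x : ℝ) :
    chR (s - x) • g x = (Set.Iio s).indicator g x := by
  unfold chR
  rw [Set.indicator_apply]
  by_cases h : x < s
  · rw [if_pos (sub_pos.2 h), if_pos (show x ∈ Set.Iio s from h), one_smul]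
  · rw [if_neg (fun hc => h (sub_pos.1 hc)), if_neg (show x ∉ Set.Iio s from h), zero_smul]

lemma sm_chR {N : ℕ} (s : ℝ) : StronglyMeasurable (fun u : Fin (N+1) → ℝ => chR (s - u 0)) := by
  unfold chR
  exact Measurable.stronglyMeasurable
    (Measurable.ite (measurableSet_lt measurable_const
      (measurable_const.sub (measurable_pi_apply 0))) measurable_const measurable_const)

lemma exv_lt (n : ℕ) (u : Fin n → ℝ) (i : ℕ) (h : i < n) : exv n u i = u ⟨i, h⟩ := dif_pos h

lemma pc_one' (φ : ℕ → ℝ → ℝ → E →L[ℂ] E) (v : ℕ → ℝ) : pc H φ 1 v = H (v 0) := by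
  show H (v 0) * qc H φ 0 v = H (v 0)
  show H (v 0) * 1 = H (v 0)
  rw [mul_one]

lemma exv_cons_zero (n : ℕ) (x : ℝ) (v : Fin n → ℝ) :
    exv (n+1) (Fin.cons x v) 0 = x := by
  rw [exv_lt (n+1) _ 0 (by omega)]
  rfl

lemma exv_cons_succ (n : ℕ) (x : ℝ) (v : Fin n → ℝ) (i : ℕ) (h : i < n) :
    exv (n+1) (Fin.cons x v) (i+1) = exv n v i := by
  rw [exv_lt (n+1) _ (i+1) (by omega), exv_lt n v i h]
  rfl

/-- key decomposition: `pc` over `n+2` points with first point split off. -/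
lemma pc_cons_dec (P : E →L[ℂ] E) (n : ℕ) (x : ℝ) (v : Fin (n+1) → ℝ) :
    pc H (phiM P 0) (n+2) (exv (n+2) (Fin.cons x v)) =
      chR (x - v 0) • (H x * pc H (phiM P 0) (n+1) (exv (n+1) v)) := by
  have hs := pc_split (H := H) 0 (n+1) (by omega) (phiM P 0) (exv (n+2) (Fin.cons x v))
  rw [show (0:ℕ)+1+(n+1) = n+2 from by omega] at hs
  rw [hs, pc_one']
  rw [exv_cons_zero]
  have h1 : exv (n+2) (Fin.cons x v) 1 = v 0 := by
    have := exv_cons_succ (n+1) x v 0 (by omega)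
    rw [this, exv_lt (n+1) v 0 (by omega)]
    rfl
  rw [h1]
  have h2 : phiM P 0 0 x (v 0) = chO (x - v 0) := by
    unfold phiM; rw [if_neg (by omega)]
  rw [h2]
  have h3 : pc H (fun j => phiM P 0 (j + (0+1))) (n+1)
      (fun i => exv (n+2) (Fin.cons x v) (i + (0+1))) =
      pc H (phiM P 0) (n+1) (exv (n+1) v) := by
    refine pc_congr (n+1) _ _ (fun j hj a b => ?_) (fun i hi => ?_)
    · show phiM P 0 (j + 1) a b = phiM P 0 j a b
      unfold phiM
      rw [if_neg (by omega), if_neg (by omega)]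
    · show exv (n+2) (Fin.cons x v) (i + 1) = exv (n+1) v i
      exact exv_cons_succ (n+1) x v i hi
  rw [h3, mul_assoc, chO_mul, mul_smul_comm]

/-- integrability of the main integrands over the cube -/
lemma intOn_pc (hH : Continuous H) {MH : ℝ} (hMH : ∀ x ∈ Set.Icc t₀ t, ‖H x‖ ≤ MH)
    (hMH0 : 0 ≤ MH) (P : E →L[ℂ] E) (n c : ℕ) :
    IntegrableOn (fun u : Fin n → ℝ => pc H (phiM P c) n (exv n u)) (cube t₀ t n) volume := by
  refine integrableOn_of_bound (measurableSet_cube t₀ t n) (cube_vol_lt t₀ t n)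
    (sm_pcFin hH P n c).aestronglyMeasurable
    (C := (MH + 1) * (MT P * MH + 1) ^ n) (fun u hu => ?_)
  refine pc_bound hMH hMH0 n c _ (fun i hi => ?_)
  rw [exv_lt n u i hi]
  exact mem_cube.1 hu _

end bridge


section lemA

variable {H : ℝ → E →L[ℂ] E} {t₀ t MH : ℝ}

lemma icc_inter_iio {s : ℝ} (hst : s ≤ t) :
    Set.Icc t₀ t ∩ Set.Iio s = Set.Ico t₀ s := by
  ext x
  simp only [Set.mem_inter_iff, Set.mem_Icc, Set.mem_Iio, Set.mem_Ico]
  constructor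
  · rintro ⟨⟨h1, _⟩, h3⟩; exact ⟨h1, h3⟩
  · rintro ⟨h1, h3⟩; exact ⟨⟨h1, le_trans (le_of_lt h3) hst⟩, h3⟩

variable [CompleteSpace E]

lemma lemA (hH : Continuous H) (hMH : ∀ x ∈ Set.Icc t₀ t, ‖H x‖ ≤ MH) (hMH0 : 0 ≤ MH)
    (P : E →L[ℂ] E) :
    ∀ (n : ℕ) (A : E →L[ℂ] E) (s : ℝ), t₀ ≤ s → s ≤ t →
      ∫ u in cube t₀ t (n+1), chR (s - u 0) • (A * pc H (phiM P 0) (n+1) (exv (n+1) u)) =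
        nested (n+1) (fun w => A * pH H (n+1) w) t₀ s
  | 0, A, s, hs0, hs1 => by
      set e1 : (Fin 1 → ℝ) ≃ᵐ ℝ := MeasurableEquiv.funUnique (Fin 1) ℝ with he1
      have mp : MeasurePreserving e1.symm volume volume :=
        (volume_preserving_funUnique (Fin 1) ℝ).symm
      have hpre : ⇑e1.symm ⁻¹' (cube t₀ t 1) = Set.Icc t₀ t := by
        ext x
        show (e1.symm x) ∈ cube t₀ t 1 ↔ _
        rw [mem_cube]
        constructor
        · intro h; exact h 0
        · intro h i; exact h
      calc ∫ u in cube t₀ t 1, chR (s - u 0) • (A * pc H (phiM P 0) 1 (exv 1 u))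
          = ∫ x in ⇑e1.symm ⁻¹' (cube t₀ t 1),
              chR (s - (e1.symm x) 0) • (A * pc H (phiM P 0) 1 (exv 1 (e1.symm x))) :=
            (mp.setIntegral_preimage_emb (e1.symm.measurableEmbedding) _ _).symm
        _ = ∫ x in Set.Icc t₀ t, chR (s - x) • (A * H x) := by
            rw [hpre]
            refine setIntegral_congr_fun measurableSet_Icc (fun x _ => ?_)
            rw [pc_one', exv_lt 1 _ 0 (by omega)]
            rfl
        _ = ∫ x in Set.Icc t₀ t, (Set.Iio s).indicator (fun x => A * H x) x := by
            refine setIntegral_congr_fun measurableSet_Icc (fun x _ => ?_)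
            exact chR_smul_eq_indicator s (fun x => A * H x) x
        _ = ∫ x in Set.Icc t₀ t ∩ Set.Iio s, A * H x := setIntegral_indicator measurableSet_Iio
        _ = ∫ x in Set.Ico t₀ s, A * H x := by rw [icc_inter_iio hs1]
        _ = ∫ x in Set.Ioc t₀ s, A * H x := setIntegral_congr_set Ico_ae_eq_Ioc
        _ = ∫ x in t₀..s, A * H x := (intervalIntegral.integral_of_le hs0).symm
        _ = nested 1 (fun w => A * pH H 1 w) t₀ s := by
            show _ = ∫ x in t₀..s, nested 0 (fun u => A * pH H 1 (Fin.cons x u)) t₀ x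
            refine intervalIntegral.integral_congr (fun x _ => ?_)
            show A * H x = A * pH H 1 (Fin.cons x Fin.elim0)
            rw [pH_one]
  | n+1, A, s, hs0, hs1 => by
      have hpcb : ∀ u ∈ cube t₀ t (n+2),
          ‖pc H (phiM P 0) (n+2) (exv (n+2) u)‖ ≤ (MH + 1) * (MT P * MH + 1) ^ (n+2) := by
        intro u hu
        refine pc_bound hMH hMH0 (n+2) 0 _ (fun i hi => ?_)
        rw [exv_lt _ u i hi]
        exact mem_cube.1 hu _
      rw [peel (n+1) (fun u => chR (s - u 0) • (A * pc H (phiM P 0) (n+2) (exv (n+2) u)))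
        ((sm_chR s).smul (stronglyMeasurable_const.mul (sm_pcFin hH P (n+2) 0)))
        (‖A‖ * ((MH + 1) * (MT P * MH + 1) ^ (n+2)))
        (fun u hu => by
          show ‖chR (s - u 0) • (A * pc H (phiM P 0) (n+2) (exv (n+2) u))‖ ≤ _
          refine le_trans (ContinuousLinearMap.opNorm_smul_le _ _) ?_
          calc ‖chR (s - u 0)‖ * ‖A * pc H (phiM P 0) (n+2) (exv (n+2) u)‖
              ≤ 1 * (‖A‖ * ((MH + 1) * (MT P * MH + 1) ^ (n+2))) := by
                refine mul_le_mul ?_ ?_ (norm_nonneg _) zero_le_one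
                · rw [Real.norm_eq_abs]; exact chR_abs_le _
                · exact le_trans (norm_mul_le _ _)
                    (mul_le_mul_of_nonneg_left (hpcb u hu) (norm_nonneg A))
            _ = ‖A‖ * ((MH + 1) * (MT P * MH + 1) ^ (n+2)) := one_mul _)]
      have hx : Set.EqOn
          (fun x : ℝ => ∫ v in cube t₀ t (n+1),
            chR (s - x) • (A * pc H (phiM P 0) (n+2) (exv (n+2) (Fin.cons x v))))
          (fun x : ℝ => chR (s - x) •
            nested (n+1) (fun w => (A * H x) * pH H (n+1) w) t₀ x) (Set.Icc t₀ t) := by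
        intro x hxm
        have h1 : ∀ v : Fin (n+1) → ℝ,
            chR (s - x) • (A * pc H (phiM P 0) (n+2) (exv (n+2) (Fin.cons x v)))
              = chR (s - x) • (chR (x - v 0) •
                  ((A * H x) * pc H (phiM P 0) (n+1) (exv (n+1) v))) := by
          intro v
          rw [pc_cons_dec P n x v, mul_smul_comm, ← mul_assoc]
        show (∫ v in cube t₀ t (n+1), chR (s - x) •
            (A * pc H (phiM P 0) (n+2) (exv (n+2) (Fin.cons x v)))) = _
        rw [show (fun v : Fin (n+1) → ℝ => chR (s - x) •
            (A * pc H (phiM P 0) (n+2) (exv (n+2) (Fin.cons x v)))) = fun v =>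
              chR (s - x) • (chR (x - v 0) •
                ((A * H x) * pc H (phiM P 0) (n+1) (exv (n+1) v))) from funext h1]
        rw [integral_smul]
        congr 1
        exact lemA hH hMH hMH0 P n (A * H x) x hxm.1 hxm.2
      refine Eq.trans (setIntegral_congr_fun measurableSet_Icc hx) ?_
      calc ∫ x in Set.Icc t₀ t, chR (s - x) •
            nested (n+1) (fun w => (A * H x) * pH H (n+1) w) t₀ x
          = ∫ x in Set.Icc t₀ t, (Set.Iio s).indicator
              (fun x => nested (n+1) (fun w => (A * H x) * pH H (n+1) w) t₀ x) x := by
            refine setIntegral_congr_fun measurableSet_Icc (fun x _ => ?_)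
            exact chR_smul_eq_indicator s _ x
        _ = ∫ x in Set.Icc t₀ t ∩ Set.Iio s,
              nested (n+1) (fun w => (A * H x) * pH H (n+1) w) t₀ x :=
            setIntegral_indicator measurableSet_Iio
        _ = ∫ x in Set.Ico t₀ s,
              nested (n+1) (fun w => (A * H x) * pH H (n+1) w) t₀ x := by
            rw [icc_inter_iio hs1]
        _ = ∫ x in Set.Ioc t₀ s,
              nested (n+1) (fun w => (A * H x) * pH H (n+1) w) t₀ x :=
            setIntegral_congr_set Ico_ae_eq_Ioc
        _ = ∫ x in t₀..s,
              nested (n+1) (fun w => (A * H x) * pH H (n+1) w) t₀ x :=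
            (intervalIntegral.integral_of_le hs0).symm
        _ = nested (n+2) (fun w => A * pH H (n+2) w) t₀ s := by
            show _ = ∫ x in t₀..s,
              nested (n+1) (fun u => A * pH H (n+2) (Fin.cons x u)) t₀ x
            refine intervalIntegral.integral_congr (fun x _ => ?_)
            congr 1
            funext w
            rw [pH_cons, ← mul_assoc]

lemma cubeChi (hH : Continuous H) (hMH : ∀ x ∈ Set.Icc t₀ t, ‖H x‖ ≤ MH) (hMH0 : 0 ≤ MH)
    (P : E →L[ℂ] E) (hle : t₀ ≤ t) (n : ℕ) :
    ∫ u in cube t₀ t (n+1), pc H (phiM P 0) (n+1) (exv (n+1) u) =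
      nested (n+1) (pH H (n+1)) t₀ t := by
  cases n with
  | zero =>
      set e1 : (Fin 1 → ℝ) ≃ᵐ ℝ := MeasurableEquiv.funUnique (Fin 1) ℝ with he1
      have mp : MeasurePreserving e1.symm volume volume :=
        (volume_preserving_funUnique (Fin 1) ℝ).symm
      have hpre : ⇑e1.symm ⁻¹' (cube t₀ t 1) = Set.Icc t₀ t := by
        ext x
        show (e1.symm x) ∈ cube t₀ t 1 ↔ _
        rw [mem_cube]
        exact ⟨fun h => h 0, fun h i => h⟩
      calc ∫ u in cube t₀ t 1, pc H (phiM P 0) 1 (exv 1 u)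
          = ∫ x in ⇑e1.symm ⁻¹' (cube t₀ t 1), pc H (phiM P 0) 1 (exv 1 (e1.symm x)) :=
            (mp.setIntegral_preimage_emb (e1.symm.measurableEmbedding) _ _).symm
        _ = ∫ x in Set.Icc t₀ t, H x := by
            rw [hpre]
            refine setIntegral_congr_fun measurableSet_Icc (fun x _ => ?_)
            rw [pc_one', exv_lt 1 _ 0 (by omega)]
            rfl
        _ = ∫ x in Set.Ioc t₀ t, H x := integral_Icc_eq_integral_Ioc
        _ = ∫ x in t₀..t, H x := (intervalIntegral.integral_of_le hle).symm
        _ = nested 1 (pH H 1) t₀ t := by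
            show _ = ∫ x in t₀..t, nested 0 (fun u => pH H 1 (Fin.cons x u)) t₀ x
            refine intervalIntegral.integral_congr (fun x _ => ?_)
            show H x = pH H 1 (Fin.cons x Fin.elim0)
            rw [pH_one]
  | succ n =>
      have hpcb : ∀ u ∈ cube t₀ t (n+2),
          ‖pc H (phiM P 0) (n+2) (exv (n+2) u)‖ ≤ (MH + 1) * (MT P * MH + 1) ^ (n+2) := by
        intro u hu
        refine pc_bound hMH hMH0 (n+2) 0 _ (fun i hi => ?_)
        rw [exv_lt _ u i hi]
        exact mem_cube.1 hu _
      rw [peel (n+1) (fun u => pc H (phiM P 0) (n+2) (exv (n+2) u))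
        (sm_pcFin hH P (n+2) 0) ((MH + 1) * (MT P * MH + 1) ^ (n+2)) hpcb]
      have hx : Set.EqOn
          (fun x : ℝ => ∫ v in cube t₀ t (n+1), pc H (phiM P 0) (n+2) (exv (n+2) (Fin.cons x v)))
          (fun x : ℝ => nested (n+1) (fun w => H x * pH H (n+1) w) t₀ x) (Set.Icc t₀ t) := by
        intro x hxm
        show (∫ v in cube t₀ t (n+1), pc H (phiM P 0) (n+2) (exv (n+2) (Fin.cons x v))) = _
        rw [show (fun v : Fin (n+1) → ℝ => pc H (phiM P 0) (n+2) (exv (n+2) (Fin.cons x v)))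
          = fun v => chR (x - v 0) • (H x * pc H (phiM P 0) (n+1) (exv (n+1) v)) from
            funext (fun v => pc_cons_dec P n x v)]
        exact lemA hH hMH hMH0 P n (H x) x hxm.1 hxm.2
      refine Eq.trans (setIntegral_congr_fun measurableSet_Icc hx) ?_
      calc ∫ x in Set.Icc t₀ t, nested (n+1) (fun w => H x * pH H (n+1) w) t₀ x
          = ∫ x in Set.Ioc t₀ t, nested (n+1) (fun w => H x * pH H (n+1) w) t₀ x :=
            integral_Icc_eq_integral_Ioc
        _ = ∫ x in t₀..t, nested (n+1) (fun w => H x * pH H (n+1) w) t₀ x :=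
            (intervalIntegral.integral_of_le hle).symm
        _ = nested (n+2) (pH H (n+2)) t₀ t := by
            show _ = ∫ x in t₀..t, nested (n+1) (fun u => pH H (n+2) (Fin.cons x u)) t₀ x
            refine intervalIntegral.integral_congr (fun x _ => ?_)
            congr 1
            funext w
            rw [pH_cons]

end lemA


section final

variable {H : ℝ → E →L[ℂ] E} {t₀ t MH : ℝ}

/-- constant theta gap function -/
noncomputable def thf (P : E →L[ℂ] E) : ℕ → ℝ → ℝ → E →L[ℂ] E :=
  fun _ a b => thetaP P (a - b)

lemma listProd_eq_pc (P : E →L[ℂ] E) : ∀ (n : ℕ) (u : Fin n → ℝ),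
    (List.ofFn fun i : Fin n =>
      H (u i) * if h : (i : ℕ) + 1 < n then thetaP P (u i - u ⟨(i : ℕ) + 1, h⟩) else 1).prod
      = pc H (thf P) n (exv n u)
  | 0, u => by simp [pc]
  | n+1, u => by
      rw [List.ofFn_succ, List.prod_cons]
      have hfun : (fun i : Fin n =>
          H (u i.succ) * if h : (i.succ : ℕ) + 1 < n + 1 then
            thetaP P (u i.succ - u ⟨(i.succ : ℕ) + 1, h⟩) else 1)
          = (fun i : Fin n =>
          H ((u ∘ Fin.succ) i) * if h : (i : ℕ) + 1 < n then
            thetaP P ((u ∘ Fin.succ) i - (u ∘ Fin.succ) ⟨(i : ℕ) + 1, h⟩) else 1) := by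
        funext i
        by_cases h : (i : ℕ) + 1 < n
        · rw [dif_pos (show (i.succ : ℕ) + 1 < n + 1 by simp only [Fin.val_succ]; omega),
            dif_pos h]
          rfl
        · rw [dif_neg (show ¬ ((i.succ : ℕ) + 1 < n + 1) by simp only [Fin.val_succ]; omega),
            dif_neg h]
          rfl
      rw [hfun, listProd_eq_pc P n (u ∘ Fin.succ)]
      cases n with
      | zero =>
          rw [dif_neg (by norm_num)]
          rw [mul_one]
          show H (u 0) * (1 : E →L[ℂ] E) = _
          rw [mul_one, pc_one', exv_lt 1 u 0 (by omega)]
          rfl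
      | succ n' =>
          rw [dif_pos (by simp only [Fin.val_zero]; omega)]
          have hs := pc_split (H := H) 0 (n'+1) (by omega) (thf P) (exv (n'+2) u)
          rw [show (0:ℕ)+1+(n'+1) = n'+2 from by omega] at hs
          rw [hs, pc_one']
          have h0 : exv (n'+2) u 0 = u 0 := by rw [exv_lt _ u 0 (by omega)]; rfl
          have h1 : exv (n'+2) u 1 = u ⟨((0 : Fin (n'+2)) : ℕ) + 1,
              by simp only [Fin.val_zero]; omega⟩ := by
            rw [exv_lt _ u 1 (by omega)]
            congr 1
          have h3 : pc H (fun j => thf P (j + (0+1))) (n'+1)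
              (fun i => exv (n'+2) u (i + (0+1))) = pc H (thf P) (n'+1)
                (exv (n'+1) (u ∘ Fin.succ)) := by
            refine pc_congr (n'+1) _ _ (fun j hj a b => rfl) (fun i hi => ?_)
            show exv (n'+2) u (i+1) = _
            rw [exv_lt _ u (i+1) (by omega), exv_lt _ _ i hi]
            rfl
          rw [h0, h1, h3]
          rfl

lemma pc_thf_phiM (P : E →L[ℂ] E) (n : ℕ) (v : ℕ → ℝ) :
    pc H (thf P) n v = pc H (phiM P (n-1)) n v := by
  refine pc_congr n v v (fun j hj a b => ?_) (fun _ _ => rfl)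
  show thetaP P (a - b) = _
  unfold phiM
  rw [if_pos (by omega)]

lemma Cterm_eq (P : E →L[ℂ] E) (n : ℕ) :
    Cterm H P t₀ t n = (-Complex.I) ^ n •
      ∫ u in cube t₀ t n, pc H (phiM P (n-1)) n (exv n u) := by
  unfold Cterm
  congr 1
  refine setIntegral_congr_fun (measurableSet_cube t₀ t n) (fun u _ => ?_)
  rw [listProd_eq_pc P n u, pc_thf_phiM]

variable [CompleteSpace E]

lemma recStep (hH : Continuous H) (hMH : ∀ x ∈ Set.Icc t₀ t, ‖H x‖ ≤ MH) (hMH0 : 0 ≤ MH)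
    (P : E →L[ℂ] E) (hle : t₀ ≤ t) (m k : ℕ) (hm : 1 ≤ m) (hk : 1 ≤ k) :
    ((-Complex.I) ^ (m+k) • ∫ u in cube t₀ t (m+k), pc H (phiM P m) (m+k) (exv (m+k) u))
      = ((-Complex.I) ^ (m+k) •
          ∫ u in cube t₀ t (m+k), pc H (phiM P (m-1)) (m+k) (exv (m+k) u))
        - Cterm H P t₀ t m * P * Uterm H t₀ t k := by
  obtain ⟨a, rfl⟩ : ∃ a, m = a + 1 := ⟨m - 1, by omega⟩
  set f : (Fin (a+1) → ℝ) → E →L[ℂ] E :=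
    fun x => pc H (phiM P a) (a+1) (exv (a+1) x) with hf
  set g : (Fin k → ℝ) → E →L[ℂ] E :=
    fun y => P * pc H (phiM P 0) k (exv k y) with hg
  have hpt : ∀ u : Fin (a+1+k) → ℝ,
      pc H (phiM P (a+1)) (a+1+k) (exv (a+1+k) u)
        - pc H (phiM P a) (a+1+k) (exv (a+1+k) u)
      = -(f (fun i => u (Fin.castAdd k i)) * g (fun i => u (Fin.natAdd (a+1) i))) := by
    intro u
    set v := exv (a+1+k) u with hv
    have h1 := pc_split (H := H) a k hk (phiM P (a+1)) v
    have h2 := pc_split (H := H) a k hk (phiM P a) v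
    rw [h1, h2]
    rw [show phiM P (a+1) a (v a) (v (a+1)) = thetaP P (v a - v (a+1)) from
      if_pos (by omega)]
    rw [show phiM P a a (v a) (v (a+1)) = chO (v a - v (a+1)) from if_neg (by omega)]
    rw [phiM_shift P (a+1) (a+1), phiM_shift P a (a+1)]
    rw [show (a+1) - (a+1) = 0 from by omega, show a - (a+1) = 0 from by omega]
    have hpref : pc H (phiM P (a+1)) (a+1) v = pc H (phiM P a) (a+1) v := by
      refine pc_congr (a+1) v v (fun j hj x y => ?_) (fun _ _ => rfl)
      unfold phiM
      rw [if_pos (by omega), if_pos (by omega)]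
    rw [hpref]
    have hpreff : pc H (phiM P a) (a+1) v = f (fun i => u (Fin.castAdd k i)) := by
      rw [hf]
      refine pc_congr (a+1) v _ (fun _ _ _ _ => rfl) (fun i hi => ?_)
      rw [hv, exv_lt _ u i (by omega), exv_lt _ _ i hi]
      rfl
    have hsuff : pc H (phiM P 0) k (fun i => v (i + (a+1)))
        = pc H (phiM P 0) k (exv k (fun i => u (Fin.natAdd (a+1) i))) := by
      refine pc_congr k _ _ (fun _ _ _ _ => rfl) (fun i hi => ?_)
      rw [hv, exv_lt _ u (i + (a+1)) (by omega), exv_lt _ _ i hi]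
      show u _ = u _
      congr 1
      exact Fin.ext (by simp [Fin.natAdd]; omega)
    rw [hpreff, hsuff, thetaP_eq]
    set X := f (fun i => u (Fin.castAdd k i)) with hX
    set S := pc H (phiM P 0) k (exv k (fun i => u (Fin.natAdd (a+1) i))) with hS
    show X * (chO (v a - v (a+1)) - P) * S - X * chO (v a - v (a+1)) * S = -(X * (P * S))
    rw [mul_sub, sub_mul, show X * (P * S) = X * P * S from (mul_assoc _ _ _).symm]
    abel
  -- integral identity
  have hIm := intOn_pc (t₀ := t₀) (t := t) hH hMH hMH0 P (a+1+k) (a+1)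
  have hIm' := intOn_pc (t₀ := t₀) (t := t) hH hMH hMH0 P (a+1+k) a
  have hIk := intOn_pc (t₀ := t₀) (t := t) hH hMH hMH0 P k 0
  have hintdiff :
      (∫ u in cube t₀ t (a+1+k), pc H (phiM P (a+1)) (a+1+k) (exv (a+1+k) u))
        - (∫ u in cube t₀ t (a+1+k), pc H (phiM P a) (a+1+k) (exv (a+1+k) u))
      = - ((∫ x in cube t₀ t (a+1), f x) * ∫ y in cube t₀ t k, g y) := by
    rw [← integral_sub hIm hIm']
    rw [show (fun u : Fin (a+1+k) → ℝ =>
        pc H (phiM P (a+1)) (a+1+k) (exv (a+1+k) u)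
          - pc H (phiM P a) (a+1+k) (exv (a+1+k) u))
      = fun u => -(f (fun i => u (Fin.castAdd k i)) * g (fun i => u (Fin.natAdd (a+1) i)))
      from funext hpt]
    rw [integral_neg]
    congr 1
    refine splitInt (a+1) k f g (sm_pcFin hH P (a+1) a)
      (stronglyMeasurable_const.mul (sm_pcFin hH P k 0))
      ((MH + 1) * (MT P * MH + 1) ^ (a+1)) (‖P‖ * ((MH + 1) * (MT P * MH + 1) ^ k))
      (fun x hx => ?_) (fun y hy => ?_)
    · refine pc_bound hMH hMH0 (a+1) a _ (fun i hi => ?_)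
      rw [exv_lt _ x i hi]
      exact mem_cube.1 hx _
    · refine le_trans (norm_mul_le _ _) (mul_le_mul_of_nonneg_left ?_ (norm_nonneg P))
      refine pc_bound hMH hMH0 k 0 _ (fun i hi => ?_)
      rw [exv_lt _ y i hi]
      exact mem_cube.1 hy _
  have hgint : (∫ y in cube t₀ t k, g y)
      = P * ∫ y in cube t₀ t k, pc H (phiM P 0) k (exv k y) :=
    (ContinuousLinearMap.mul ℂ (E →L[ℂ] E) P).integral_comp_comm hIk
  obtain ⟨k', rfl⟩ : ∃ k', k = k' + 1 := ⟨k - 1, by omega⟩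
  have husual : (∫ y in cube t₀ t (k'+1), pc H (phiM P 0) (k'+1) (exv (k'+1) y))
      = nested (k'+1) (pH H (k'+1)) t₀ t := cubeChi hH hMH hMH0 P hle k'
  have hC : Cterm H P t₀ t (a+1) = (-Complex.I) ^ (a+1) • ∫ x in cube t₀ t (a+1), f x := by
    rw [Cterm_eq P (a+1)]
    rw [show (a+1) - 1 = a from by omega]
  have hU : Uterm H t₀ t (k'+1) = (-Complex.I) ^ (k'+1) • nested (k'+1) (pH H (k'+1)) t₀ t := rfl
  rw [show ((-Complex.I) ^ (a+1+(k'+1)) •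
      ∫ u in cube t₀ t (a+1+(k'+1)), pc H (phiM P (a+1)) (a+1+(k'+1)) (exv (a+1+(k'+1)) u))
    = ((-Complex.I) ^ (a+1+(k'+1)) •
      ∫ u in cube t₀ t (a+1+(k'+1)), pc H (phiM P a) (a+1+(k'+1)) (exv (a+1+(k'+1)) u))
      + (-Complex.I) ^ (a+1+(k'+1)) •
        (((∫ u in cube t₀ t (a+1+(k'+1)),
            pc H (phiM P (a+1)) (a+1+(k'+1)) (exv (a+1+(k'+1)) u))
          - ∫ u in cube t₀ t (a+1+(k'+1)),
              pc H (phiM P a) (a+1+(k'+1)) (exv (a+1+(k'+1)) u))) from by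
    rw [← smul_add]
    congr 1
    abel]
  rw [hintdiff, hgint, husual]
  rw [show (a+1) - 1 = a from by omega]
  rw [sub_eq_add_neg]
  congr 1
  rw [smul_neg, hC, hU, smul_mul_assoc, smul_mul_assoc, mul_smul_comm, smul_smul, ← pow_add,
    mul_assoc]

end final

end DysonAux

/-- For every `n ≥ 1`:
`Uₙ(t,t₀) = Cₙ(t,t₀) + Σ_{i=1}^{n−1} Cᵢ(t,t₀) P U_{n−i}(t,t₀)`
(for `n = 1` the sum on the right-hand side is empty). -/
theorem Uterm_eq_Cterm_add_sum (H : ℝ → E →L[ℂ] E) (hH : Continuous H)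
    (P : E →L[ℂ] E) (hP : P * P = P) (t₀ t : ℝ) (hle : t₀ ≤ t)
    (n : ℕ) (hn : 1 ≤ n) :
    Uterm H t₀ t n =
      Cterm H P t₀ t n +
        ∑ i ∈ Finset.Ico 1 n, Cterm H P t₀ t i * P * Uterm H t₀ t (n - i) := by
  classical
  obtain ⟨MH', hMH'⟩ := isCompact_Icc.exists_bound_of_continuousOn hH.continuousOn
  set MH := max MH' 0 with hMHdef
  have hMH : ∀ x ∈ Set.Icc t₀ t, ‖H x‖ ≤ MH := fun x hx =>
    le_trans (hMH' x hx) (le_max_left _ _)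
  have hMH0 : 0 ≤ MH := le_max_right _ _
  obtain ⟨n', rfl⟩ : ∃ n', n = n' + 1 := ⟨n - 1, by omega⟩
  have key : ∀ d, d + 1 ≤ n' + 1 →
      ((-Complex.I) ^ (n'+1) • ∫ u in DysonAux.cube t₀ t (n'+1),
        DysonAux.pc H (DysonAux.phiM P d) (n'+1) (DysonAux.exv (n'+1) u))
      = Uterm H t₀ t (n'+1) -
        ∑ i ∈ Finset.Ico 1 (d+1), Cterm H P t₀ t i * P * Uterm H t₀ t (n'+1-i) := by
    intro d
    induction d with
    | zero =>
        intro _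
        rw [DysonAux.cubeChi hH hMH hMH0 P hle n']
        rw [Finset.Ico_self, Finset.sum_empty, sub_zero]
        rfl
    | succ d ih =>
        intro hd
        have hmk : (d+1) + (n'+1-(d+1)) = n'+1 := by omega
        have hrs := DysonAux.recStep hH hMH hMH0 P hle (d+1) (n'+1-(d+1)) (by omega) (by omega)
        rw [hmk] at hrs
        rw [show (d+1) - 1 = d from by omega] at hrs
        rw [hrs, ih (by omega)]
        rw [Finset.sum_Ico_succ_top (by omega : 1 ≤ d+1)]
        rw [sub_sub]
  have hfinal := key n' (by omega)
  have hC := DysonAux.Cterm_eq (H := H) (t₀ := t₀) (t := t) P (n'+1)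
  rw [show (n'+1) - 1 = n' from by omega] at hC
  rw [← hC] at hfinal
  rw [hfinal, sub_add_cancel]
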